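/- arXiv:1810.04705 — 5 statements merged into one kernel-verified Lean document; each statement's English description precedes it below -/
import Mathlib

section
/- Let H₁ be a complex normed space and H₂ a complex Hilbert space, let T₁ : H₂ → H₁ be a compact bounded linear operator, let T₂ : H₁ → H₂ be a bounded linear operator, and set N = T₁ ∘ T₂. Let φ ∈ H₁ with φ not in the range of T₁. Then for every sequence (gₙ) in H₁ such that ‖N gₙ − φ‖ → 0 as n → ∞, one has ‖T₂ gₙ‖ → ∞. (This is case 2 of Theorem 1 of the paper in its abstract operator form: if the sampling point z lies outside D, then any approximate solutions g_z^ε of the near-field equation have ‖T^{A→Γ} g_z^ε‖ → ∞ as ε → 0.) -/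
open Filter InnerProductSpace
open scoped InnerProductSpace ComplexConjugate

theorem stmt_1
    {H₁ H₂ : Type*}
    [NormedAddCommGroup H₁] [NormedSpace ℂ H₁]
    [NormedAddCommGroup H₂] [InnerProductSpace ℂ H₂] [CompleteSpace H₂]
    (T₁ : H₂ →L[ℂ] H₁) (hT₁ : IsCompactOperator T₁)
    (T₂ : H₁ →L[ℂ] H₂)
    (N : H₁ →L[ℂ] H₁) (hN : N = T₁.comp T₂)
    (φ : H₁) (hφ : φ ∉ Set.range T₁)
    (g : ℕ → H₁)
    (hg : Filter.Tendsto (fun n => ‖N (g n) - φ‖) Filter.atTop (nhds 0)) :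
    Filter.Tendsto (fun n => ‖T₂ (g n)‖) Filter.atTop Filter.atTop := by
  by_contra hcon
  -- extract a subsequence along which ‖T₂ (g n)‖ is bounded by some C
  rw [tendsto_atTop] at hcon
  push_neg at hcon
  obtain ⟨C, hC⟩ := hcon
  obtain ⟨φ', hφ'mono, hφ'⟩ := Filter.extraction_of_frequently_atTop hC
  have hC0 : 0 ≤ C := le_of_lt (lt_of_le_of_lt (norm_nonneg _) (hφ' 0))
  set x : ℕ → H₂ := fun k => T₂ (g (φ' k)) with hxdef
  have hxC : ∀ k, ‖x k‖ ≤ C := fun k => (hφ' k).le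
  -- N (g n) → φ
  have hNg : Tendsto (fun n => N (g n)) atTop (nhds φ) := by
    rw [tendsto_iff_norm_sub_tendsto_zero]
    exact hg
  have hT₁x : Tendsto (fun k => T₁ (x k)) atTop (nhds φ) := by
    have := hNg.comp hφ'mono.tendsto_atTop
    simpa [hN, Function.comp_def] using this
  -- diagonal argument: extract ψ so that ⟪x j, x (ψ k)⟫ converges for all j
  have hcompact : IsCompact (Set.univ.pi fun _ : ℕ => Metric.closedBall (0 : ℂ) (C * C)) :=
    isCompact_univ_pi fun _ => isCompact_closedBall _ _
  have hmem : ∀ k, (fun j => (⟪x j, x k⟫_ℂ)) ∈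
      (Set.univ.pi fun _ : ℕ => Metric.closedBall (0 : ℂ) (C * C)) := by
    intro k j _
    simp only [Metric.mem_closedBall, dist_zero_right]
    calc ‖(⟪x j, x k⟫_ℂ)‖ ≤ ‖x j‖ * ‖x k‖ := norm_inner_le_norm _ _
      _ ≤ C * C := mul_le_mul (hxC j) (hxC k) (norm_nonneg _) hC0
  obtain ⟨a, -, ψ, hψmono, hψ⟩ := hcompact.isSeqCompact fun k => hmem k
  set y : ℕ → H₂ := fun k => x (ψ k) with hydef
  have hyC : ∀ k, ‖y k‖ ≤ C := fun k => hxC (ψ k)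
  have hya : ∀ j, Tendsto (fun k => (⟪x j, y k⟫_ℂ)) atTop (nhds (a j)) := by
    intro j
    have := (continuous_apply j).continuousAt.tendsto.comp hψ
    simpa [Function.comp_def] using this
  have hT₁y : Tendsto (fun k => T₁ (y k)) atTop (nhds φ) :=
    hT₁x.comp hψmono.tendsto_atTop
  -- limits exist for all z in the closure of the span of the x's
  set M := (Submodule.span ℂ (Set.range x)).topologicalClosure with hMdef
  haveI : CompleteSpace M :=
    (Submodule.isClosed_topologicalClosure _).completeSpace_coe
  have hxM : ∀ k, x k ∈ M := fun k =>
    (Submodule.le_topologicalClosure _) (Submodule.subset_span ⟨k, rfl⟩)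
  have hspan : ∀ z ∈ Submodule.span ℂ (Set.range x),
      ∃ l : ℂ, Tendsto (fun k => (⟪z, y k⟫_ℂ)) atTop (nhds l) := by
    intro z hz
    induction hz using Submodule.span_induction with
    | mem w hw =>
      obtain ⟨j, rfl⟩ := hw
      exact ⟨a j, hya j⟩
    | zero => exact ⟨0, by simp [inner_zero_left, tendsto_const_nhds]⟩
    | add w v _ _ hw hv =>
      obtain ⟨l₁, h₁⟩ := hw
      obtain ⟨l₂, h₂⟩ := hv
      exact ⟨l₁ + l₂, by simpa [inner_add_left] using h₁.add h₂⟩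
    | smul s w _ hw =>
      obtain ⟨l, hl⟩ := hw
      exact ⟨conj s * l, by simpa [inner_smul_left, mul_comm] using hl.const_mul (conj s)⟩
  have hclos : ∀ z ∈ M, ∃ l : ℂ, Tendsto (fun k => (⟪z, y k⟫_ℂ)) atTop (nhds l) := by
    intro z hz
    have hcauchy : CauchySeq (fun k => (⟪z, y k⟫_ℂ)) := by
      rw [Metric.cauchySeq_iff]
      intro ε hε
      have hε3 : 0 < ε / 3 := by linarith
      -- choose w in the span close to z
      have hzc : z ∈ closure ((Submodule.span ℂ (Set.range x) : Submodule ℂ H₂) : Set H₂) := hz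
      rw [Metric.mem_closure_iff] at hzc
      obtain ⟨w, hwmem, hwz⟩ := hzc (ε / 3 / (C + 1)) (by positivity)
      obtain ⟨l, hl⟩ := hspan w hwmem
      have hwy : ∀ k, ‖(⟪z, y k⟫_ℂ) - (⟪w, y k⟫_ℂ)‖ < ε / 3 := by
        intro k
        rw [← inner_sub_left]
        calc ‖(⟪z - w, y k⟫_ℂ)‖ ≤ ‖z - w‖ * ‖y k‖ := norm_inner_le_norm _ _
          _ ≤ ‖z - w‖ * (C + 1) := by
              have := hyC k
              have h0 : 0 ≤ ‖z - w‖ := norm_nonneg _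
              nlinarith
          _ < ε / 3 / (C + 1) * (C + 1) := by
              have : ‖z - w‖ < ε / 3 / (C + 1) := by rwa [← dist_eq_norm]
              have hC1 : (0:ℝ) < C + 1 := by linarith
              exact mul_lt_mul_of_pos_right this hC1
          _ = ε / 3 := by field_simp
      have hlc : CauchySeq (fun k => (⟪w, y k⟫_ℂ)) := hl.cauchySeq
      rw [Metric.cauchySeq_iff] at hlc
      obtain ⟨Nw, hNw⟩ := hlc (ε / 3) hε3
      refine ⟨Nw, fun m hm n hn => ?_⟩
      have h1 := hwy m
      have h2 := hwy n
      have h3 := hNw m hm n hn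
      rw [dist_eq_norm] at h3 ⊢
      calc ‖(⟪z, y m⟫_ℂ) - (⟪z, y n⟫_ℂ)‖
          = ‖((⟪z, y m⟫_ℂ) - (⟪w, y m⟫_ℂ)) + ((⟪w, y m⟫_ℂ) - (⟪w, y n⟫_ℂ))
              + ((⟪w, y n⟫_ℂ) - (⟪z, y n⟫_ℂ))‖ := by ring_nf
        _ ≤ ‖(⟪z, y m⟫_ℂ) - (⟪w, y m⟫_ℂ)‖ + ‖(⟪w, y m⟫_ℂ) - (⟪w, y n⟫_ℂ)‖
              + ‖(⟪w, y n⟫_ℂ) - (⟪z, y n⟫_ℂ)‖ := norm_add₃_le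
        _ < ε / 3 + ε / 3 + ε / 3 := by
            have h2' : ‖(⟪w, y n⟫_ℂ) - (⟪z, y n⟫_ℂ)‖ < ε / 3 := by
              rwa [norm_sub_rev]
            exact add_lt_add (add_lt_add h1 h3) h2'
        _ = ε := by ring
    exact cauchySeq_tendsto_of_complete hcauchy
  -- limits exist for all z, via the orthogonal projection onto M
  have hall : ∀ z : H₂, ∃ l : ℂ, Tendsto (fun k => (⟪z, y k⟫_ℂ)) atTop (nhds l) := by
    intro z
    obtain ⟨l, hl⟩ := hclos ((M.orthogonalProjectionOnto z : H₂)) (M.orthogonalProjectionOnto z).2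
    refine ⟨l, ?_⟩
    have hperp : ∀ k, (⟪z - (M.orthogonalProjectionOnto z : H₂), y k⟫_ℂ) = 0 := by
      intro k
      exact (Submodule.mem_orthogonal' M _).1 (Submodule.sub_starProjection_mem_orthogonal (K := M) z)
        (y k) (hxM (ψ k))
    have : ∀ k, (⟪z, y k⟫_ℂ) = (⟪(M.orthogonalProjectionOnto z : H₂), y k⟫_ℂ) := by
      intro k
      have := hperp k
      rw [inner_sub_left] at this
      linear_combination this
    simpa [this] using hl
  choose c hc using hall
  -- build the weak limit x₀ via Riesz representation
  have hcadd : ∀ z w : H₂, c (z + w) = c z + c w := by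
    intro z w
    refine tendsto_nhds_unique (hc (z + w)) ?_
    simpa [inner_add_left] using (hc z).add (hc w)
  have hcsmul : ∀ (s : ℂ) (z : H₂), c (s • z) = conj s * c z := by
    intro s z
    refine tendsto_nhds_unique (hc (s • z)) ?_
    simpa [inner_smul_left, mul_comm] using (hc z).const_mul (conj s)
  have hcbound : ∀ z : H₂, ‖c z‖ ≤ C * ‖z‖ := by
    intro z
    refine le_of_tendsto' (hc z).norm fun k => ?_
    calc ‖(⟪z, y k⟫_ℂ)‖ ≤ ‖z‖ * ‖y k‖ := norm_inner_le_norm _ _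
      _ ≤ ‖z‖ * C := mul_le_mul_of_nonneg_left (hyC k) (norm_nonneg _)
      _ = C * ‖z‖ := mul_comm _ _
  let fLin : H₂ →ₗ[ℂ] ℂ :=
    { toFun := fun z => conj (c z)
      map_add' := fun z w => by simp [hcadd, map_add]
      map_smul' := fun s z => by simp [hcsmul, map_mul, mul_comm] }
  let f : H₂ →L[ℂ] ℂ := LinearMap.mkContinuous fLin C fun z => by
    show ‖conj (c z)‖ ≤ C * ‖z‖
    simpa using hcbound z
  set x₀ : H₂ := (InnerProductSpace.toDual ℂ H₂).symm f with hx₀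
  have hx₀inner : ∀ z : H₂, (⟪z, x₀⟫_ℂ) = c z := by
    intro z
    have : (⟪x₀, z⟫_ℂ) = f z := InnerProductSpace.toDual_symm_apply
    have h2 : (⟪z, x₀⟫_ℂ) = conj (f z) := by
      rw [← inner_conj_symm, this]
    rw [h2]
    simp [f, fLin, LinearMap.mkContinuous_apply]
  -- weak convergence: for every dual functional ℓ on H₁, ℓ (T₁ (y k)) → ℓ (T₁ x₀)
  have hweak : ∀ ℓ : StrongDual ℂ H₁, ℓ (T₁ x₀) = ℓ φ := by
    intro ℓ
    set w : H₂ := (InnerProductSpace.toDual ℂ H₂).symm (ℓ.comp T₁) with hw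
    have hwrep : ∀ v : H₂, ℓ (T₁ v) = (⟪w, v⟫_ℂ) := by
      intro v
      have : (⟪w, v⟫_ℂ) = (ℓ.comp T₁) v := InnerProductSpace.toDual_symm_apply
      simpa using this.symm
    have h1 : Tendsto (fun k => ℓ (T₁ (y k))) atTop (nhds (ℓ φ)) :=
      (ℓ.continuous.tendsto φ).comp hT₁y
    have h2 : Tendsto (fun k => ℓ (T₁ (y k))) atTop (nhds (ℓ (T₁ x₀))) := by
      have : Tendsto (fun k => (⟪w, y k⟫_ℂ)) atTop (nhds (c w)) := hc w
      rw [hwrep, hx₀inner]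
      simpa [hwrep] using this
    exact tendsto_nhds_unique h2 h1
  have : T₁ x₀ = φ := (NormedSpace.eq_iff_forall_dual_eq ℂ).2 hweak
  exact hφ ⟨x₀, this⟩
end

section
/- Let H₁ and H₂ be complex Hilbert spaces, let T₂ : H₁ → H₂ be a bounded linear operator with dense range, let T₁ : H₂ → H₁ be a nonzero compact bounded linear operator with dense range, and set N = T₁ ∘ T₂. Let φ ∈ H₁. Then: (i) for every ε > 0 there exists g ∈ H₁ with ‖N g − φ‖ < ε; (ii) if φ lies in the range of T₁, then there exists M ≥ 0 such that for every ε > 0 the element g in (i) can be chosen with ‖T₂ g‖ ≤ M; (iii) if φ does not lie in the range of T₁, then for every sequence (gₙ) with ‖N gₙ − φ‖ → 0 one has ‖T₂ gₙ‖ → ∞. (This is the abstract operator form of the dichotomy in Theorem 2 of the paper, where H₂ is the data space H on Γ ∪ ∂Ω, T₂ = T^{A→Γ,Ω}, T₁ = T^{Γ,Ω→A}, and φ = G(·,z)|_A.) -/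
open Filter Metric Topology NormedSpace InnerProductSpace

/-- In a Hilbert space, the image of a closed ball under a bounded operator is closed
(consequence of weak compactness of the ball, via Banach–Alaoglu and the Riesz
representation). -/
lemma isClosed_image_closedBall_aux {H₁ H₂ : Type*}
    [NormedAddCommGroup H₁] [InnerProductSpace ℂ H₁] [CompleteSpace H₁]
    [NormedAddCommGroup H₂] [InnerProductSpace ℂ H₂] [CompleteSpace H₂]
    (T₁ : H₂ →L[ℂ] H₁) (C : ℝ) :
    IsClosed (T₁ '' Metric.closedBall 0 C) := by
  haveI : T2Space (WeakSpace ℂ H₁) := by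
    refine (WeakBilin.isEmbedding (B := (topDualPairing ℂ H₁).flip) ?_).t2Space
    intro x y h
    have h2 := congrArg (fun ψ : StrongDual ℂ H₁ →ₗ[ℂ] ℂ =>
      ψ (toDual ℂ H₁ (x - y))) h
    simp only [LinearMap.flip_apply, topDualPairing_apply, toDual_apply_apply] at h2
    have h3 : (inner ℂ (x - y) (x - y) : ℂ) = 0 := by
      rw [inner_sub_right, h2, sub_self]
    exact sub_eq_zero.mp (inner_self_eq_zero.mp h3)
  set Φ : WeakDual ℂ H₂ → WeakSpace ℂ H₁ :=
    fun f => toWeakSpace ℂ H₁ (T₁ ((toDual ℂ H₂).symm (WeakDual.toStrongDual f))) with hΦ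
  have hΦcont : Continuous Φ := by
    apply WeakBilin.continuous_of_continuous_eval
    intro l
    have key : (fun f : WeakDual ℂ H₂ => ((topDualPairing ℂ H₁).flip (Φ f)) l)
        = fun f : WeakDual ℂ H₂ =>
            (starRingEnd ℂ) (f ((toDual ℂ H₂).symm (l.comp T₁))) := by
      funext f
      have h1 : ((topDualPairing ℂ H₁).flip (Φ f)) l
          = l (T₁ ((toDual ℂ H₂).symm (WeakDual.toStrongDual f))) := rfl
      rw [h1]
      set w := (toDual ℂ H₂).symm (l.comp T₁)
      set y := (toDual ℂ H₂).symm (WeakDual.toStrongDual f)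
      have h2 : l (T₁ y) = (inner ℂ w y : ℂ) := by
        rw [toDual_symm_apply]; rfl
      have h3 : (f : H₂ → ℂ) w = (inner ℂ y w : ℂ) := by
        have : (WeakDual.toStrongDual f) w = (inner ℂ y w : ℂ) := by
          conv_lhs => rw [show WeakDual.toStrongDual f = toDual ℂ H₂ y from
            ((toDual ℂ H₂).apply_symm_apply _).symm]
          rw [toDual_apply_apply]
        exact this
      rw [h2, h3, ← inner_conj_symm]
    rw [key]
    exact RCLike.continuous_conj.comp
      (WeakBilin.eval_continuous (topDualPairing ℂ H₂) _)
  have hK : IsCompact (WeakDual.toStrongDual ⁻¹' Metric.closedBall 0 C : Set (WeakDual ℂ H₂)) :=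
    WeakDual.isCompact_closedBall (𝕜 := ℂ) (E := H₂) 0 C
  have himg : Φ '' (WeakDual.toStrongDual ⁻¹' Metric.closedBall 0 C)
      = toWeakSpace ℂ H₁ '' (T₁ '' Metric.closedBall 0 C) := by
    ext x
    constructor
    · rintro ⟨f, hf, rfl⟩
      refine ⟨T₁ ((toDual ℂ H₂).symm (WeakDual.toStrongDual f)),
        ⟨(toDual ℂ H₂).symm (WeakDual.toStrongDual f), ?_, rfl⟩, rfl⟩
      simp only [Set.mem_preimage, Metric.mem_closedBall, dist_zero_right] at hf ⊢
      rw [LinearIsometryEquiv.norm_map]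
      exact hf
    · rintro ⟨-, ⟨y, hy, rfl⟩, rfl⟩
      refine ⟨WeakDual.toStrongDual.symm (toDual ℂ H₂ y), ?_, ?_⟩
      · simp only [Set.mem_preimage, LinearEquiv.apply_symm_apply, Metric.mem_closedBall,
          dist_zero_right, LinearIsometryEquiv.norm_map]
        simpa [dist_zero_right] using hy
      · simp only [hΦ, LinearEquiv.apply_symm_apply, LinearIsometryEquiv.symm_apply_apply]
  have hcl : IsCompact (toWeakSpace ℂ H₁ '' (T₁ '' Metric.closedBall 0 C)) :=
    himg ▸ hK.image hΦcont
  have hpre : T₁ '' Metric.closedBall 0 C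
      = toWeakSpaceCLM ℂ H₁ ⁻¹' (toWeakSpace ℂ H₁ '' (T₁ '' Metric.closedBall 0 C)) := by
    ext x
    simp only [Set.mem_preimage, toWeakSpaceCLM_eq_toWeakSpace]
    exact ⟨fun hx => ⟨x, hx, rfl⟩, fun ⟨z, hz, hzx⟩ =>
      (toWeakSpace ℂ H₁).injective hzx ▸ hz⟩
  rw [hpre]
  exact hcl.isClosed.preimage (toWeakSpaceCLM ℂ H₁).continuous

theorem stmt_3
    {H₁ H₂ : Type*}
    [NormedAddCommGroup H₁] [InnerProductSpace ℂ H₁] [CompleteSpace H₁]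
    [NormedAddCommGroup H₂] [InnerProductSpace ℂ H₂] [CompleteSpace H₂]
    (T₂ : H₁ →L[ℂ] H₂) (hT₂ : DenseRange T₂)
    (T₁ : H₂ →L[ℂ] H₁) (hT₁ : T₁ ≠ 0) (hT₁c : IsCompactOperator T₁)
    (hT₁d : DenseRange T₁)
    (N : H₁ →L[ℂ] H₁) (hN : N = T₁.comp T₂)
    (φ : H₁) :
    (∀ ε : ℝ, 0 < ε → ∃ g : H₁, ‖N g - φ‖ < ε) ∧
    (φ ∈ Set.range T₁ →
      ∃ M : ℝ, 0 ≤ M ∧ ∀ ε : ℝ, 0 < ε →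
        ∃ g : H₁, ‖N g - φ‖ < ε ∧ ‖T₂ g‖ ≤ M) ∧
    (φ ∉ Set.range T₁ →
      ∀ g : ℕ → H₁,
        Filter.Tendsto (fun n => ‖N (g n) - φ‖) Filter.atTop (nhds 0) →
        Filter.Tendsto (fun n => ‖T₂ (g n)‖) Filter.atTop Filter.atTop) := by
  have hNd : DenseRange (N : H₁ → H₁) := by
    rw [hN]
    exact hT₁d.comp hT₂ T₁.continuous
  refine ⟨?_, ?_, ?_⟩
  · intro ε hε
    obtain ⟨g, hg⟩ := hNd.exists_dist_lt φ hε
    exact ⟨g, by rwa [dist_comm, dist_eq_norm] at hg⟩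
  · rintro ⟨ψ, rfl⟩
    refine ⟨‖ψ‖ + 1, by positivity, fun ε hε => ?_⟩
    have hδ : (0:ℝ) < min 1 (ε / (‖T₁‖ + 1)) := by
      have : (0:ℝ) < ‖T₁‖ + 1 := by positivity
      exact lt_min one_pos (div_pos hε this)
    obtain ⟨g, hg⟩ := hT₂.exists_dist_lt ψ hδ
    rw [dist_comm, dist_eq_norm] at hg
    refine ⟨g, ?_, ?_⟩
    · have h1 : N g - T₁ ψ = T₁ (T₂ g - ψ) := by rw [hN]; simp [map_sub]
      rw [h1]
      calc ‖T₁ (T₂ g - ψ)‖ ≤ ‖T₁‖ * ‖T₂ g - ψ‖ := T₁.le_opNorm _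
        _ ≤ ‖T₁‖ * (ε / (‖T₁‖ + 1)) := by
            apply mul_le_mul_of_nonneg_left (le_of_lt (lt_of_lt_of_le hg (min_le_right _ _)))
              (norm_nonneg _)
        _ < ε := by
            rw [mul_div_assoc']
            rw [div_lt_iff₀ (by positivity)]
            nlinarith [norm_nonneg T₁]
    · calc ‖T₂ g‖ = ‖ψ + (T₂ g - ψ)‖ := by rw [show ψ + (T₂ g - ψ) = T₂ g by abel]
        _ ≤ ‖ψ‖ + ‖T₂ g - ψ‖ := norm_add_le _ _
        _ ≤ ‖ψ‖ + 1 := by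
            have := lt_of_lt_of_le hg (min_le_left _ _)
            linarith
  · intro hφ g hconv
    by_contra hcontra
    rw [Filter.tendsto_atTop] at hcontra
    push_neg at hcontra
    obtain ⟨C, hC⟩ := hcontra
    have hCfreq : ∃ᶠ n in atTop, ‖T₂ (g n)‖ ≤ C := hC.mono fun n h => h.le
    have hmem : φ ∈ closure (T₁ '' Metric.closedBall 0 C) := by
      rw [Metric.mem_closure_iff]
      intro ε hε
      have hev : ∀ᶠ n in atTop, ‖N (g n) - φ‖ < ε := by
        have := hconv.eventually (gt_mem_nhds hε)
        exact this
      obtain ⟨n, hn1, hn2⟩ := (hCfreq.and_eventually hev).exists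
      refine ⟨N (g n), ⟨T₂ (g n), ?_, by rw [hN]; rfl⟩, ?_⟩
      · simpa [Metric.mem_closedBall, dist_zero_right] using hn1
      · rw [dist_eq_norm, ← norm_neg]
        simpa [neg_sub] using hn2
    rw [(isClosed_image_closedBall_aux T₁ C).closure_eq] at hmem
    obtain ⟨y, -, hy⟩ := hmem
    exact hφ ⟨y, hy⟩
end

section
/- Fix k > 0. There exists a constant C > 0, depending only on k, such that for every real λ ≥ 0, |i·β(λ) + √(1+λ)|² · (1+λ) ≤ C. Consequently, for every sequence λ : ℕ → ℝ with λ_j ≥ 0 and every g : ℕ → ℂ, one has the inequality of (possibly infinite) sums ∑_{j=0}^∞ (1+λ_j)^{1/2} · |i·β(λ_j) + √(1+λ_j)|² · |g_j|² ≤ C · ∑_{j=0}^∞ (1+λ_j)^{-1/2} · |g_j|². (This is the smoothing estimate (A14)–(A16) in the proof of Lemma A1, showing that Λ_k − Λ_i maps Ĥ^{-1/2}(L) boundedly into Ĥ^{1/2}(L).) -/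
/-- The mode wavenumber of the waveguide (eq. (1.6) of the paper):
`β(λ) = √(k² − λ)` if `λ ≤ k²` and `β(λ) = i √(λ − k²)` otherwise. -/
noncomputable def modeWavenumber (k lam : ℝ) : ℂ :=
  if lam ≤ k ^ 2 then (Real.sqrt (k ^ 2 - lam) : ℂ)
  else Complex.I * (Real.sqrt (lam - k ^ 2) : ℂ)

lemma pointwise_bound (k : ℝ) (hk : 0 < k) (lam : ℝ) (hlam : 0 ≤ lam) :
    ‖Complex.I * modeWavenumber k lam + (Real.sqrt (1 + lam) : ℂ)‖ ^ 2 *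
      (1 + lam) ≤ (1 + k ^ 2) ^ 2 := by
  have h1 : (0:ℝ) ≤ 1 + lam := by linarith
  set s := Real.sqrt (1 + lam) with hs
  have hs2 : s ^ 2 = 1 + lam := Real.sq_sqrt h1
  have hsnn : 0 ≤ s := Real.sqrt_nonneg _
  unfold modeWavenumber
  by_cases h : lam ≤ k ^ 2
  · rw [if_pos h]
    set r := Real.sqrt (k ^ 2 - lam) with hr
    have hr2 : r ^ 2 = k ^ 2 - lam := Real.sq_sqrt (by linarith)
    have habs : ‖Complex.I * (r : ℂ) + (s : ℂ)‖ ^ 2 = s ^ 2 + r ^ 2 := by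
      rw [Complex.sq_norm, Complex.normSq_apply]
      simp
      ring
    rw [habs, hs2, hr2]
    nlinarith
  · rw [if_neg h]
    push_neg at h
    set a := Real.sqrt (lam - k ^ 2) with ha
    have ha2 : a ^ 2 = lam - k ^ 2 := Real.sq_sqrt (by linarith)
    have hann : 0 ≤ a := Real.sqrt_nonneg _
    have hz : Complex.I * (Complex.I * (a : ℂ)) + (s : ℂ) = ((s - a : ℝ) : ℂ) := by
      rw [← mul_assoc, Complex.I_mul_I]
      push_cast
      ring
    rw [hz, Complex.norm_real, Real.norm_eq_abs]
    have hsa : a ≤ s := by nlinarith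
    rw [abs_of_nonneg (by linarith)]
    nlinarith [sq_nonneg (s - a), mul_nonneg (sub_nonneg.mpr hsa) hann]

theorem stmt_6 (k : ℝ) (hk : 0 < k) :
    ∃ C : ℝ, 0 < C ∧
      (∀ lam : ℝ, 0 ≤ lam →
        ‖Complex.I * modeWavenumber k lam + (Real.sqrt (1 + lam) : ℂ)‖ ^ 2 *
          (1 + lam) ≤ C) ∧
      (∀ lam : ℕ → ℝ, (∀ j, 0 ≤ lam j) → ∀ g : ℕ → ℂ,
        (∑' j : ℕ, ENNReal.ofReal (Real.sqrt (1 + lam j) *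
            ‖Complex.I * modeWavenumber k (lam j) +
              (Real.sqrt (1 + lam j) : ℂ)‖ ^ 2 * ‖g j‖ ^ 2)) ≤
          ENNReal.ofReal C *
            ∑' j : ℕ, ENNReal.ofReal ((Real.sqrt (1 + lam j))⁻¹ * ‖g j‖ ^ 2)) := by
  refine ⟨(1 + k ^ 2) ^ 2, by positivity, fun lam hlam => pointwise_bound k hk lam hlam,
    fun lam hlam g => ?_⟩
  rw [← ENNReal.tsum_mul_left]
  apply ENNReal.tsum_le_tsum
  intro j
  rw [← ENNReal.ofReal_mul (by positivity)]
  apply ENNReal.ofReal_le_ofReal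
  have h1 : (0:ℝ) < 1 + lam j := by linarith [hlam j]
  have hspos : 0 < Real.sqrt (1 + lam j) := Real.sqrt_pos.mpr h1
  have hs2 : Real.sqrt (1 + lam j) ^ 2 = 1 + lam j := Real.sq_sqrt h1.le
  have key := pointwise_bound k hk (lam j) (hlam j)
  have hgnn : (0:ℝ) ≤ ‖g j‖ ^ 2 := by positivity
  have hstep : Real.sqrt (1 + lam j) *
      ‖Complex.I * modeWavenumber k (lam j) +
        (Real.sqrt (1 + lam j) : ℂ)‖ ^ 2 ≤
      (1 + k ^ 2) ^ 2 * (Real.sqrt (1 + lam j))⁻¹ := by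
    rw [← div_eq_mul_inv, le_div_iff₀ hspos]
    nlinarith [key, hs2, norm_nonneg (Complex.I * modeWavenumber k (lam j) + (Real.sqrt (1 + lam j) : ℂ))]
  calc Real.sqrt (1 + lam j) * ‖Complex.I * modeWavenumber k (lam j) +
        (Real.sqrt (1 + lam j) : ℂ)‖ ^ 2 * ‖g j‖ ^ 2
      ≤ (1 + k ^ 2) ^ 2 * (Real.sqrt (1 + lam j))⁻¹ * ‖g j‖ ^ 2 :=
        mul_le_mul_of_nonneg_right hstep hgnn
    _ = (1 + k ^ 2) ^ 2 * ((Real.sqrt (1 + lam j))⁻¹ * ‖g j‖ ^ 2) := by ring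
end

section
/- Fix k > 0 and a sequence λ : ℕ → ℝ with λ_j ≥ 0 for all j and λ_j → ∞ as j → ∞, and set d_j = (i·β(λ_j) + √(1 + λ_j)) / √(1 + λ_j) ∈ ℂ. Then there exists a continuous linear operator D on the Hilbert space ℓ²(ℕ, ℂ) such that (D v)_j = d_j · v_j for every v ∈ ℓ²(ℕ, ℂ) and every j, and D is a compact operator. (This is the operator-theoretic content of the third claim of Lemma A1: the map Λ_k − Λ_i : Ĥ^{1/2}(L) → Ĥ^{-1/2}(L), conjugated by the isometric identifications of the weighted spaces Ĥ^{±1/2}(L) with ℓ², is the diagonal operator with symbol d_j, and it is compact because d_j → 0.) -/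
open scoped ENNReal

local notation "ℓ²" => lp (fun _ : ℕ => ℂ) 2

lemma rpow_two' (x : ℝ) : x ^ (2 : ℝ≥0∞).toReal = x ^ 2 := by
  rw [ENNReal.toReal_ofNat, ← Real.rpow_natCast x 2]
  norm_num

lemma memℓp_diag (a : ℕ → ℂ) {C : ℝ} (hC : ∀ j, ‖a j‖ ≤ C) (v : ℓ²) :
    Memℓp (fun j => a j * v j) 2 := by
  have h2 : (0:ℝ) < (2 : ℝ≥0∞).toReal := by norm_num
  apply memℓp_gen
  have hv := (lp.memℓp v).summable h2
  simp only [rpow_two'] at hv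
  have hC0 : 0 ≤ C := le_trans (norm_nonneg _) (hC 0)
  refine Summable.of_nonneg_of_le (fun j => by positivity) (fun j => ?_) (hv.mul_left (C ^ 2))
  simp only [rpow_two', norm_mul, mul_pow]
  exact mul_le_mul_of_nonneg_right (pow_le_pow_left₀ (norm_nonneg _) (hC j) 2) (sq_nonneg _)

lemma lp_norm_le {w v : ℓ²} {c : ℝ} (hc : 0 ≤ c) (h : ∀ j, ‖w j‖ ≤ c * ‖v j‖) :
    ‖w‖ ≤ c * ‖v‖ := by
  have h2 : (0:ℝ) < (2 : ℝ≥0∞).toReal := by norm_num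
  have hw := lp.norm_rpow_eq_tsum h2 w
  have hv := lp.norm_rpow_eq_tsum h2 v
  simp only [rpow_two'] at hw hv
  have key : ‖w‖ ^ 2 ≤ (c * ‖v‖) ^ 2 := by
    rw [hw, mul_pow, hv, ← tsum_mul_left]
    refine Summable.tsum_le_tsum (fun j => ?_) ?_ ?_
    · have h1 := h j
      have h0 := norm_nonneg ((w : ∀ _ : ℕ, ℂ) j)
      nlinarith [norm_nonneg ((v : ∀ _ : ℕ, ℂ) j)]
    · simpa only [rpow_two'] using (lp.memℓp w).summable h2
    · exact Summable.mul_left _ (by simpa only [rpow_two'] using (lp.memℓp v).summable h2)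
  exact (pow_le_pow_iff_left₀ (lp.norm_nonneg' w) (mul_nonneg hc (lp.norm_nonneg' v)) two_ne_zero).mp key

noncomputable def diagCLM (a : ℕ → ℂ) {C : ℝ} (hC0 : 0 ≤ C) (hC : ∀ j, ‖a j‖ ≤ C) :
    ℓ² →L[ℂ] ℓ² :=
  LinearMap.mkContinuous
    { toFun := fun v => ⟨fun j => a j * v j, memℓp_diag a hC v⟩
      map_add' := fun v w => by
        ext j
        simp [mul_add]
        rfl
      map_smul' := fun c v => by
        ext j
        simp
        ring }
    C
    (fun v => by
      refine lp_norm_le hC0 (fun j => ?_)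
      show ‖a j * (v : ∀ _ : ℕ, ℂ) j‖ ≤ C * ‖(v : ∀ _ : ℕ, ℂ) j‖
      rw [norm_mul]
      exact mul_le_mul_of_nonneg_right (hC j) (norm_nonneg _))

lemma diagCLM_apply (a : ℕ → ℂ) {C : ℝ} (hC0 : 0 ≤ C) (hC : ∀ j, ‖a j‖ ≤ C) (v : ℓ²) (j : ℕ) :
    (diagCLM a hC0 hC v : ∀ _ : ℕ, ℂ) j = a j * v j := rfl

lemma isCompactOperator_of_range_fin (f : ℓ² →L[ℂ] ℓ²) (V : Submodule ℂ ℓ²)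
    [FiniteDimensional ℂ V] (hV : ∀ x, f x ∈ V) : IsCompactOperator f := by
  refine ⟨Subtype.val '' Metric.closedBall (0 : V) ‖f‖, ?_, ?_⟩
  · exact (isCompact_closedBall (0 : V) ‖f‖).image continuous_subtype_val
  · refine Filter.mem_of_superset (Metric.closedBall_mem_nhds (0 : ℓ²) one_pos) ?_
    intro v hv
    refine ⟨⟨f v, hV v⟩, ?_, rfl⟩
    rw [Metric.mem_closedBall, dist_zero_right]
    calc ‖(⟨f v, hV v⟩ : V)‖ = ‖f v‖ := rfl
      _ ≤ ‖f‖ * ‖v‖ := f.le_opNorm v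
      _ ≤ ‖f‖ * 1 := by
          have := Metric.mem_closedBall.mp hv
          rw [dist_zero_right] at this
          exact mul_le_mul_of_nonneg_left this (norm_nonneg f)
      _ = ‖f‖ := mul_one _

lemma diag_trunc_compact (a : ℕ → ℂ) {C : ℝ} (hC0 : 0 ≤ C) (n : ℕ)
    (hC : ∀ j, ‖if j < n then a j else 0‖ ≤ C) :
    IsCompactOperator (diagCLM (fun j => if j < n then a j else 0) hC0 hC) := by
  set V := Submodule.span ℂ ((fun j : ℕ => lp.single 2 j (1 : ℂ)) '' Set.Iio n) with hVdef
  haveI : FiniteDimensional ℂ V :=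
    FiniteDimensional.span_of_finite ℂ ((Set.finite_Iio n).image _)
  apply isCompactOperator_of_range_fin _ V
  intro v
  have hrepr : diagCLM (fun j => if j < n then a j else 0) hC0 hC v =
      ∑ j ∈ Finset.range n, (a j * v j) • lp.single 2 j (1 : ℂ) := by
    ext i
    rw [lp.coeFn_sum, Finset.sum_apply, diagCLM_apply, eq_comm]
    by_cases hi : i < n
    · rw [if_pos hi, Finset.sum_eq_single i]
      · rw [lp.coeFn_smul, Pi.smul_apply, lp.single_apply_self, smul_eq_mul, mul_one]
      · intro j hj hne
        rw [lp.coeFn_smul, Pi.smul_apply, lp.single_apply_ne 2 j _ (Ne.symm hne), smul_zero]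
      · intro h
        exact absurd (Finset.mem_range.mpr hi) h
    · rw [if_neg hi, zero_mul]
      apply Finset.sum_eq_zero
      intro j hj
      have hne : i ≠ j := fun h => hi (h ▸ Finset.mem_range.mp hj)
      rw [lp.coeFn_smul, Pi.smul_apply, lp.single_apply_ne 2 j _ hne, smul_zero]
  rw [hrepr]
  exact Submodule.sum_mem _ (fun j hj => Submodule.smul_mem _ _
    (Submodule.subset_span ⟨j, Finset.mem_range.mp hj, rfl⟩))

lemma diagCLM_compact (a : ℕ → ℂ) {C : ℝ} (hC0 : 0 ≤ C) (hC : ∀ j, ‖a j‖ ≤ C)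
    (ha : Filter.Tendsto a Filter.atTop (nhds 0)) :
    IsCompactOperator (diagCLM a hC0 hC) := by
  have hCn : ∀ n j, ‖if j < n then a j else 0‖ ≤ C := by
    intro n j
    split
    · exact hC j
    · simpa using hC0
  apply isCompactOperator_of_tendsto (l := Filter.atTop)
    (F := fun n => diagCLM (fun j => if j < n then a j else 0) hC0 (hCn n))
  · rw [Metric.tendsto_atTop]
    intro ε hε
    obtain ⟨N, hN⟩ := Metric.tendsto_atTop.mp ha (ε / 2) (half_pos hε)
    refine ⟨N, fun n hn => ?_⟩
    rw [dist_eq_norm]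
    have hb : ‖diagCLM (fun j => if j < n then a j else 0) hC0 (hCn n) - diagCLM a hC0 hC‖
        ≤ ε / 2 := by
      refine ContinuousLinearMap.opNorm_le_bound _ (half_pos hε).le fun v => ?_
      refine lp_norm_le (half_pos hε).le fun j => ?_
      have hcoord : ((diagCLM (fun j => if j < n then a j else 0) hC0 (hCn n)
          - diagCLM a hC0 hC) v : ∀ _ : ℕ, ℂ) j
          = ((if j < n then a j else 0) - a j) * v j := by
        rw [ContinuousLinearMap.sub_apply, lp.coeFn_sub, Pi.sub_apply, diagCLM_apply,
          diagCLM_apply, sub_mul]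
      rw [hcoord, norm_mul]
      refine mul_le_mul_of_nonneg_right ?_ (norm_nonneg _)
      by_cases hj : j < n
      · simp [hj, (half_pos hε).le]
      · rw [if_neg hj, zero_sub, norm_neg]
        have hjN : N ≤ j := le_trans hn (not_lt.mp hj)
        have := hN j hjN
        rw [dist_zero_right] at this
        exact this.le
    linarith
  · exact Filter.Eventually.of_forall fun n => diag_trunc_compact a hC0 n (hCn n)

lemma d_tendsto (k : ℝ) (hk : 0 < k) (lam : ℕ → ℝ) (hlam : ∀ j, 0 ≤ lam j)
    (hlim : Filter.Tendsto lam Filter.atTop Filter.atTop)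
    (d : ℕ → ℂ)
    (hd : ∀ j, d j = (Complex.I * modeWavenumber k (lam j) +
      (Real.sqrt (1 + lam j) : ℂ)) / (Real.sqrt (1 + lam j) : ℂ)) :
    Filter.Tendsto d Filter.atTop (nhds 0) := by
  rw [tendsto_zero_iff_norm_tendsto_zero]
  have hg : Filter.Tendsto (fun j => (1 + k ^ 2) / (1 + lam j)) Filter.atTop (nhds 0) := by
    have h1 : Filter.Tendsto (fun j => 1 + lam j) Filter.atTop Filter.atTop :=
      Filter.tendsto_atTop_add_const_left _ 1 hlim
    simpa [div_eq_mul_inv] using h1.inv_tendsto_atTop.const_mul (1 + k ^ 2)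
  refine squeeze_zero' (Filter.Eventually.of_forall fun j => norm_nonneg _) ?_ hg
  filter_upwards [hlim.eventually_gt_atTop (k ^ 2)] with j hj
  set s := Real.sqrt (1 + lam j) with hsdef
  set t := Real.sqrt (lam j - k ^ 2) with htdef
  have hl0 := hlam j
  have hs2 : s ^ 2 = 1 + lam j := Real.sq_sqrt (by linarith)
  have ht2 : t ^ 2 = lam j - k ^ 2 := Real.sq_sqrt (by linarith)
  have ht0 : 0 ≤ t := Real.sqrt_nonneg _
  have hts : t ≤ s := Real.sqrt_le_sqrt (by nlinarith [sq_nonneg k])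
  have hs0 : 0 < s := Real.sqrt_pos.mpr (by linarith)
  have hdj : d j = (((s - t) / s : ℝ) : ℂ) := by
    rw [hd j, modeWavenumber, if_neg (not_le.mpr hj)]
    push_cast
    rw [← mul_assoc, Complex.I_mul_I]
    ring
  rw [hdj, Complex.norm_real, Real.norm_eq_abs, abs_of_nonneg (div_nonneg (by linarith) hs0.le)]
  rw [div_le_div_iff₀ hs0 (by linarith)]
  nlinarith [mul_le_mul_of_nonneg_left hts ht0]

theorem stmt_7 (k : ℝ) (hk : 0 < k) (lam : ℕ → ℝ) (hlam : ∀ j, 0 ≤ lam j)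
    (hlim : Filter.Tendsto lam Filter.atTop Filter.atTop)
    (d : ℕ → ℂ)
    (hd : ∀ j, d j = (Complex.I * modeWavenumber k (lam j) +
      (Real.sqrt (1 + lam j) : ℂ)) / (Real.sqrt (1 + lam j) : ℂ)) :
    ∃ D : lp (fun _ : ℕ => ℂ) 2 →L[ℂ] lp (fun _ : ℕ => ℂ) 2,
      (∀ (v : lp (fun _ : ℕ => ℂ) 2) (j : ℕ), (D v : ∀ _ : ℕ, ℂ) j = d j * (v : ∀ _ : ℕ, ℂ) j) ∧
      IsCompactOperator D := by
  have htd : Filter.Tendsto d Filter.atTop (nhds 0) := d_tendsto k hk lam hlam hlim d hd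
  have hbdd : BddAbove (Set.range fun j => ‖d j‖) :=
    (tendsto_zero_iff_norm_tendsto_zero.mp htd).bddAbove_range
  obtain ⟨C, hCmem⟩ := hbdd
  have hC : ∀ j, ‖d j‖ ≤ C := fun j => hCmem ⟨j, rfl⟩
  have hC0 : 0 ≤ C := le_trans (norm_nonneg _) (hC 0)
  exact ⟨diagCLM d hC0 hC, fun v j => diagCLM_apply d hC0 hC v j,
    diagCLM_compact d hC0 hC htd⟩
end

section
/- Let J ≥ 1 be a natural number and let t : ℕ → ℝ be any sequence. Let T be the real (2J+1)×(2J+1) symmetric Toeplitz matrix with entries T_{p,q} = t(|p − q|) for 0 ≤ p, q ≤ 2J, and let M be the real (J+1)×(J+1) matrix with entries M_{0,0} = t(0), M_{0,l} = M_{l,0} = √2·t(l) for 1 ≤ l ≤ J, and M_{l,l'} = t(|l − l'|) + t(l + l') for 1 ≤ l, l' ≤ J. Suppose τ ∈ ℝ^{2J+1} is an even vector, i.e. τ_{J+l} = τ_{J−l} for 0 ≤ l ≤ J, satisfying T τ = σ τ for some σ ∈ ℝ. Define v ∈ ℝ^{J+1} by v_0 = τ_J/√2 and v_l = τ_{J+l}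 for 1 ≤ l ≤ J. Then M v = σ v. (This is the correspondence in Section 2.4.1 of the paper between the even eigenvectors/eigenvalues of the prolate Toeplitz matrix T with t(j) = (a/L)·sinc(πja/L) and the eigenvectors/eigenvalues of the Gram matrix M of the partial-aperture problem; the paper's formula v_0 = √2·τ_0 contains a scaling typo — the correct relation, which makes M v = σ v hold, is v_0 = τ_J/√2.) -/
theorem stmt_13 (J : ℕ) (hJ : 1 ≤ J) (t : ℕ → ℝ)
    (T : Matrix (Fin (2 * J + 1)) (Fin (2 * J + 1)) ℝ)
    (hT : ∀ p q : Fin (2 * J + 1), T p q = t (Nat.dist (p : ℕ) (q : ℕ)))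
    (M : Matrix (Fin (J + 1)) (Fin (J + 1)) ℝ)
    (hM00 : M 0 0 = t 0)
    (hM0l : ∀ l : Fin (J + 1), l ≠ 0 → M 0 l = Real.sqrt 2 * t l)
    (hMl0 : ∀ l : Fin (J + 1), l ≠ 0 → M l 0 = Real.sqrt 2 * t l)
    (hMll : ∀ l l' : Fin (J + 1), l ≠ 0 → l' ≠ 0 →
      M l l' = t (Nat.dist (l : ℕ) (l' : ℕ)) + t ((l : ℕ) + (l' : ℕ)))
    (τ : Fin (2 * J + 1) → ℝ)
    (hτeven : ∀ l : ℕ, ∀ h : l ≤ J,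
      τ ⟨J + l, by omega⟩ = τ ⟨J - l, by omega⟩)
    (σ : ℝ) (heig : T.mulVec τ = σ • τ)
    (v : Fin (J + 1) → ℝ)
    (hv0 : v 0 = τ ⟨J, by omega⟩ / Real.sqrt 2)
    (hvl : ∀ l : Fin (J + 1), l ≠ 0 →
      v l = τ ⟨J + (l : ℕ), by have := l.isLt; omega⟩) :
    M.mulVec v = σ • v := by
  have hs2 : (0:ℝ) < Real.sqrt 2 := by positivity
  have h2 : Real.sqrt 2 * Real.sqrt 2 = 2 := Real.mul_self_sqrt (by norm_num)
  set τ' : ℕ → ℝ := fun q => if h : q < 2 * J + 1 then τ ⟨q, h⟩ else 0 with hτ'def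
  have hτ'lt : ∀ q (h : q < 2 * J + 1), τ' q = τ ⟨q, h⟩ := by
    intro q h; rw [hτ'def]; exact dif_pos h
  -- key identity from the eigenvector equation
  have key : ∀ l : ℕ, l ≤ J →
      σ * τ' (J + l)
        = t l * τ' J
          + ∑ m ∈ Finset.range J,
              (t (Nat.dist l (m + 1)) + t (l + (m + 1))) * τ' (J + (m + 1)) := by
    intro l hl
    have hrow := congrFun heig ⟨J + l, by omega⟩
    rw [Matrix.mulVec, dotProduct, Pi.smul_apply, smul_eq_mul] at hrow
    have hsum : ∀ q : Fin (2 * J + 1),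
        T ⟨J + l, by omega⟩ q * τ q = t (Nat.dist (J + l) (q : ℕ)) * τ' (q : ℕ) := by
      intro q
      rw [hT, hτ'lt _ q.isLt]
    rw [Finset.sum_congr rfl (fun q _ => hsum q)] at hrow
    rw [Fin.sum_univ_eq_sum_range (fun q => t (Nat.dist (J + l) q) * τ' q)] at hrow
    have e4 : τ ⟨J + l, by omega⟩ = τ' (J + l) := (hτ'lt _ (by omega)).symm
    rw [e4] at hrow
    have hsplit : (2 * J + 1) = J + (J + 1) := by omega
    rw [hsplit, Finset.sum_range_add] at hrow
    -- second block: indices J..2J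
    rw [Finset.sum_range_succ' (fun m => t (Nat.dist (J + l) (J + m)) * τ' (J + m))] at hrow
    -- first block: reflect
    rw [← Finset.sum_range_reflect (fun q => t (Nat.dist (J + l) q) * τ' q) J] at hrow
    have e1 : ∀ m ∈ Finset.range J,
        t (Nat.dist (J + l) (J - 1 - m)) * τ' (J - 1 - m)
          = t (l + (m + 1)) * τ' (J + (m + 1)) := by
      intro m hm
      rw [Finset.mem_range] at hm
      have hd : Nat.dist (J + l) (J - 1 - m) = l + (m + 1) := by
        simp [Nat.dist]; omega
      have hle : m + 1 ≤ J := hm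
      have heq : τ' (J - 1 - m) = τ' (J + (m + 1)) := by
        rw [hτ'lt (J - 1 - m) (by omega), hτ'lt (J + (m + 1)) (by omega),
          hτeven (m + 1) hle]
        exact congrArg τ (Fin.ext (by show J - 1 - m = J - (m + 1); omega))
      rw [hd, heq]
    rw [Finset.sum_congr rfl e1] at hrow
    have e2 : ∀ m ∈ Finset.range J,
        t (Nat.dist (J + l) (J + (m + 1))) * τ' (J + (m + 1))
          = t (Nat.dist l (m + 1)) * τ' (J + (m + 1)) := by
      intro m _
      congr 2
      simp [Nat.dist]; omega
    rw [Finset.sum_congr rfl e2] at hrow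
    have e3 : Nat.dist (J + l) (J + 0) = l := by simp [Nat.dist]
    rw [e3] at hrow
    have e5 : τ' (J + 0) = τ' J := by norm_num
    rw [e5] at hrow
    rw [← hrow]
    have e6 : ∀ m ∈ Finset.range J,
        (t (Nat.dist l (m + 1)) + t (l + (m + 1))) * τ' (J + (m + 1))
          = t (Nat.dist l (m + 1)) * τ' (J + (m + 1))
            + t (l + (m + 1)) * τ' (J + (m + 1)) := fun m _ => add_mul _ _ _
    rw [Finset.sum_congr rfl e6, Finset.sum_add_distrib]
    ring
  -- now prove the conclusion pointwise
  funext l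
  rw [Matrix.mulVec, dotProduct, Pi.smul_apply, smul_eq_mul]
  rw [Fin.sum_univ_succ]
  have hvsucc : ∀ m : Fin J, v m.succ = τ' (J + ((m : ℕ) + 1)) := by
    intro m
    rw [hvl m.succ (Fin.succ_ne_zero m), hτ'lt _ (by have := m.isLt; omega)]
    congr 1
  by_cases hl0 : l = 0
  · subst hl0
    have hM0 : ∀ m : Fin J, M 0 m.succ * v m.succ
        = Real.sqrt 2 * t ((m : ℕ) + 1) * τ' (J + ((m : ℕ) + 1)) := by
      intro m
      rw [hM0l m.succ (Fin.succ_ne_zero m), hvsucc m]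
      norm_num
    rw [Finset.sum_congr rfl (fun m _ => hM0 m)]
    rw [Fin.sum_univ_eq_sum_range (fun m => Real.sqrt 2 * t (m + 1) * τ' (J + (m + 1)))]
    have hk := key 0 (by omega)
    simp only [Nat.add_zero, Nat.zero_add, Nat.dist_zero_left] at hk
    have hv0' : v 0 = τ' J / Real.sqrt 2 := by
      rw [hv0, hτ'lt J (by omega)]
    rw [hM00, hv0']
    set S := ∑ m ∈ Finset.range J, t (m + 1) * τ' (J + (m + 1)) with hS
    have e7 : ∑ m ∈ Finset.range J, Real.sqrt 2 * t (m + 1) * τ' (J + (m + 1))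
        = Real.sqrt 2 * S := by
      rw [hS, Finset.mul_sum]; exact Finset.sum_congr rfl (fun m _ => by ring)
    have e8 : ∑ m ∈ Finset.range J, (t (m + 1) + t (m + 1)) * τ' (J + (m + 1))
        = 2 * S := by
      rw [hS, Finset.mul_sum]; exact Finset.sum_congr rfl (fun m _ => by ring)
    rw [e7]
    rw [e8] at hk
    field_simp
    linear_combination S * h2 - hk
  · have hlv1 : (l : ℕ) ≠ 0 := by
      intro h; exact hl0 (Fin.ext (by simp [h]))
    have hlv2 : (l : ℕ) ≤ J := by have := l.isLt; omega
    have hMl : ∀ m : Fin J, M l m.succ * v m.succ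
        = (t (Nat.dist (l : ℕ) ((m : ℕ) + 1)) + t ((l : ℕ) + ((m : ℕ) + 1)))
            * τ' (J + ((m : ℕ) + 1)) := by
      intro m
      rw [hMll l m.succ hl0 (Fin.succ_ne_zero m), hvsucc m]
      congr 2
    rw [Finset.sum_congr rfl (fun m _ => hMl m)]
    rw [Fin.sum_univ_eq_sum_range
      (fun m => (t (Nat.dist (l : ℕ) (m + 1)) + t ((l : ℕ) + (m + 1))) * τ' (J + (m + 1)))]
    have hk := key (l : ℕ) hlv2
    have hv0' : v 0 = τ' J / Real.sqrt 2 := by rw [hv0, hτ'lt J (by omega)]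
    have hvl' : v l = τ' (J + (l : ℕ)) := by
      rw [hvl l hl0, hτ'lt _ (by have := l.isLt; omega)]
    rw [hMl0 l hl0, hv0', hvl', hk]
    have e9 : Real.sqrt 2 * t (l : ℕ) * (τ' J / Real.sqrt 2) = t (l : ℕ) * τ' J := by
      field_simp
    rw [e9]
end
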